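/- Let T > 0 and γ' > 0. The function f(ω) := sin((ω − ω')T) / (J'·(e^{i(ω−ω')δ} − 1)) (with T = J'δ) is Lipschitz on the set {ω : γ' ≤ |ω − ω'| < 2c'/δ} with a Lipschitz constant L ≤ 1/(ε'γ') + 1/(T·(ε'γ')²), where ε' = ε'(T) < 1 and c' are as in Lemma 5(a). -/

import Mathlib

open Real Complex


lemma exp_I_sub_one_eq (θ : ℂ) :
    Complex.exp (2*θ*Complex.I) - 1 = Complex.exp (θ*Complex.I) * (2*Complex.I*Complex.sin θ) := by
  have h1 : Complex.exp (2*θ*Complex.I) = Complex.exp (θ*Complex.I) * Complex.exp (θ*Complex.I) := by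
    rw [← Complex.exp_add]; ring_nf
  have h2 : Complex.exp (-θ*Complex.I) * Complex.exp (θ*Complex.I) = 1 := by
    rw [← Complex.exp_add]; ring_nf; exact Complex.exp_zero
  have h3 : Complex.I * Complex.I = -1 := Complex.I_mul_I
  rw [Complex.sin]
  linear_combination h1 + h2 - (Complex.exp (θ*Complex.I) * (Complex.exp (-θ*Complex.I) - Complex.exp (θ*Complex.I))) * h3

lemma abs_exp_I_sub_one (x : ℝ) :
    ‖Complex.exp (Complex.I * x) - 1‖ = 2 * |Real.sin (x/2)| := by
  have h := exp_I_sub_one_eq ((x:ℂ)/2)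
  rw [show Complex.I * (x:ℂ) = 2*((x:ℂ)/2)*Complex.I by ring, h]
  rw [norm_mul, norm_mul, norm_mul]
  rw [show ((x:ℂ)/2) = ((x/2 : ℝ) : ℂ) by push_cast; ring]
  rw [Complex.norm_exp_ofReal_mul_I, ← Complex.ofReal_sin, Complex.norm_real]
  simp

lemma half_abs (t : ℝ) : |t/2| = |t|/2 := by rw [abs_div]; norm_num

lemma abs_exp_I_sub_exp_I_le (a b : ℝ) :
    ‖Complex.exp (Complex.I * a) - Complex.exp (Complex.I * b)‖ ≤ |a - b| := by
  have h : Complex.exp (Complex.I * a) - Complex.exp (Complex.I * b)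
      = Complex.exp (Complex.I * b) * (Complex.exp (Complex.I * ((a:ℂ) - b)) - 1) := by
    rw [mul_sub, ← Complex.exp_add]; ring_nf
  rw [h, norm_mul, show ((a:ℂ) - b) = ((a - b : ℝ) : ℂ) by push_cast; ring]
  rw [show Complex.I * (b:ℂ) = (b:ℂ) * Complex.I by ring, Complex.norm_exp_ofReal_mul_I, one_mul]
  rw [abs_exp_I_sub_one]
  have h1 : |Real.sin ((a-b)/2)| ≤ |(a-b)/2| := Real.abs_sin_le_abs
  rw [half_abs] at h1
  linarith

lemma sin_lip (a b : ℝ) : |Real.sin a - Real.sin b| ≤ |a - b| := by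
  rw [Real.sin_sub_sin]
  have h1 : |Real.sin ((a-b)/2)| ≤ |a-b|/2 := by
    have := Real.abs_sin_le_abs (x := (a-b)/2); rwa [half_abs] at this
  have h2 : |Real.cos ((a+b)/2)| ≤ 1 := Real.abs_cos_le_one _
  have h0 : (0:ℝ) ≤ |Real.sin ((a-b)/2)| := abs_nonneg _
  calc |2 * Real.sin ((a-b)/2) * Real.cos ((a+b)/2)|
      = 2 * |Real.sin ((a-b)/2)| * |Real.cos ((a+b)/2)| := by
        rw [abs_mul, abs_mul]; norm_num
    _ ≤ |a - b| := by nlinarith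

/-- Lemma 5(b): the function `f(ω) = sin((ω-ω')T) / (J'(e^{i(ω-ω')δ} - 1))` is
Lipschitz on `{ω : γ' ≤ |ω-ω'| < 2c'/δ}` with constant `1/(ε'γ') + 1/(T(ε'γ')²)`. -/
theorem filter_function_lipschitz (ω' δ γ' T ε' c' : ℝ) (J' : ℕ)
    (hδ : 0 < δ) (hJ' : 0 < J') (hTdef : T = (J' : ℝ) * δ)
    (hγ' : 0 < γ') (hε'pos : 0 < ε') (hε'lt : ε' < 1) (hc' : 0 < c')
    -- `ε'` and `c'` are as in Lemma 5(a):
    (hε'sup : ∀ y : ℝ, γ' ≤ |y| → |Real.sin (y * T) / (y * T)| ≤ ε')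
    (hsinc : ∀ x : ℝ, 0 < |x| → |x| < c' → ε' < |Real.sin x / x|)
    (f : ℝ → ℂ)
    (hf : ∀ ω : ℝ, f ω = (Real.sin ((ω - ω') * T) : ℂ) /
      ((J' : ℂ) * (Complex.exp (Complex.I * ((ω - ω') * δ)) - 1))) :
    ∀ ω₁ ω₂ : ℝ,
      γ' ≤ |ω₁ - ω'| → |ω₁ - ω'| < 2 * c' / δ →
      γ' ≤ |ω₂ - ω'| → |ω₂ - ω'| < 2 * c' / δ →
      ‖f ω₁ - f ω₂‖ ≤
        (1 / (ε' * γ') + 1 / (T * (ε' * γ') ^ 2)) * |ω₁ - ω₂| := by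
  intro ω₁ ω₂ h1l h1u h2l h2u
  have hJpos : (0:ℝ) < (J':ℝ) := by exact_mod_cast hJ'
  have hT : 0 < T := by rw [hTdef]; positivity
  set P : ℝ := T * (ε' * γ') with hPdef
  have hP : 0 < P := by positivity
  -- lower bound on the denominator
  have key : ∀ ω : ℝ, γ' ≤ |ω - ω'| → |ω - ω'| < 2*c'/δ →
      P ≤ ‖(J':ℂ) * (Complex.exp (Complex.I * ((ω - ω')*δ)) - 1)‖ := by
    intro ω hl hu
    have habs : ‖(J':ℂ) * (Complex.exp (Complex.I * ((ω-ω')*δ)) - 1)‖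
        = (J':ℝ) * (2 * |Real.sin ((ω-ω')*δ/2)|) := by
      rw [norm_mul, Complex.norm_natCast,
        show Complex.I * (((ω:ℂ) - (ω':ℂ)) * (δ:ℂ)) = Complex.I * (((ω - ω')*δ : ℝ):ℂ) by
          push_cast; ring,
        abs_exp_I_sub_one]
    rw [habs]
    set x := (ω-ω')*δ/2 with hx
    have hxabs : |x| = |ω-ω'| * δ / 2 := by
      rw [hx, half_abs, abs_mul, abs_of_pos hδ]
    have hypos : 0 < |ω - ω'| := lt_of_lt_of_le hγ' hl
    have hx0 : 0 < |x| := by rw [hxabs]; positivity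
    have hxc : |x| < c' := by
      rw [hxabs]
      calc |ω-ω'| * δ / 2 < (2*c'/δ) * δ / 2 := by gcongr
        _ = c' := by field_simp
    have hs := hsinc x hx0 hxc
    rw [abs_div] at hs
    have hsin : ε' * |x| < |Real.sin x| := (lt_div_iff₀ hx0).mp hs
    have hstep : ε' * γ' * (δ/2) ≤ |Real.sin x| := by
      have h' : ε' * γ' * (δ/2) ≤ ε' * |x| := by
        rw [hxabs]
        nlinarith [mul_le_mul_of_nonneg_left hl (by positivity : (0:ℝ) ≤ ε' * (δ/2))]
      linarith
    calc P = (J':ℝ) * (2 * (ε' * γ' * (δ/2))) := by rw [hPdef, hTdef]; ring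
      _ ≤ (J':ℝ) * (2 * |Real.sin x|) := by gcongr
  set D₁ : ℂ := (J':ℂ) * (Complex.exp (Complex.I * ((ω₁-ω')*δ)) - 1) with hD1def
  set D₂ : ℂ := (J':ℂ) * (Complex.exp (Complex.I * ((ω₂-ω')*δ)) - 1) with hD2def
  have hD1 : P ≤ ‖D₁‖ := key ω₁ h1l h1u
  have hD2 : P ≤ ‖D₂‖ := key ω₂ h2l h2u
  have hD1ne : D₁ ≠ 0 := by
    intro h; rw [h, norm_zero] at hD1; linarith
  have hD2ne : D₂ ≠ 0 := by
    intro h; rw [h, norm_zero] at hD2; linarith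
  set s₁ : ℂ := ((Real.sin ((ω₁-ω')*T) : ℝ) : ℂ) with hs1def
  set s₂ : ℂ := ((Real.sin ((ω₂-ω')*T) : ℝ) : ℂ) with hs2def
  have hsplit : f ω₁ - f ω₂ = (s₁ - s₂)/D₁ + s₂ * (D₂ - D₁)/(D₁*D₂) := by
    rw [hf, hf, ← hs1def, ← hs2def, ← hD1def, ← hD2def]
    field_simp
    ring
  rw [hsplit]
  have hnum1 : ‖s₁ - s₂‖ ≤ |ω₁-ω₂| * T := by
    have he : s₁ - s₂ = ((Real.sin ((ω₁-ω')*T) - Real.sin ((ω₂-ω')*T) : ℝ) : ℂ) := by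
      rw [hs1def, hs2def]; push_cast; ring
    rw [he, Complex.norm_real, Real.norm_eq_abs]
    calc |Real.sin ((ω₁-ω')*T) - Real.sin ((ω₂-ω')*T)| ≤ |(ω₁-ω')*T - (ω₂-ω')*T| :=
          sin_lip _ _
      _ = |ω₁-ω₂| * T := by
          rw [show (ω₁-ω')*T - (ω₂-ω')*T = (ω₁-ω₂)*T by ring, abs_mul, abs_of_pos hT]
  have hnumD : ‖D₂ - D₁‖ ≤ |ω₁-ω₂| * T := by
    have he : D₂ - D₁ = (J':ℂ) * (Complex.exp (Complex.I * (((ω₂-ω')*δ:ℝ):ℂ))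
        - Complex.exp (Complex.I * (((ω₁-ω')*δ:ℝ):ℂ))) := by
      rw [hD1def, hD2def]; push_cast; ring
    rw [he, norm_mul, Complex.norm_natCast]
    calc (J':ℝ) * ‖(Complex.exp (Complex.I * (((ω₂-ω')*δ:ℝ):ℂ))
          - Complex.exp (Complex.I * (((ω₁-ω')*δ:ℝ):ℂ)))‖
        ≤ (J':ℝ) * |(ω₂-ω')*δ - (ω₁-ω')*δ| := by
          gcongr
          exact abs_exp_I_sub_exp_I_le _ _
      _ = |ω₁-ω₂| * T := by
          rw [show (ω₂-ω')*δ - (ω₁-ω')*δ = (ω₂-ω₁)*δ by ring, abs_mul, abs_of_pos hδ,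
            abs_sub_comm, hTdef]
          ring
  have hb1 : ‖(s₁-s₂)/D₁‖ ≤ (|ω₁-ω₂| * T)/P := by
    rw [norm_div]
    exact div_le_div₀ (by positivity) hnum1 hP hD1
  have hb2 : ‖s₂ * (D₂-D₁)/(D₁*D₂)‖ ≤ (1 * (|ω₁-ω₂| * T))/(P*P) := by
    rw [norm_div, norm_mul, norm_mul]
    apply div_le_div₀ (by positivity) ?_ (by positivity) ?_
    · apply mul_le_mul ?_ hnumD (norm_nonneg _) (by norm_num)
      rw [hs2def, Complex.norm_real, Real.norm_eq_abs]
      exact Real.abs_sin_le_one _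
    · exact mul_le_mul hD1 hD2 hP.le (norm_nonneg _)
  have htot := le_trans (norm_add_le _ _) (add_le_add hb1 hb2)
  refine le_trans htot (le_of_eq ?_)
  rw [hPdef]
  have hεγ : ε' * γ' ≠ 0 := by positivity
  field_simp
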